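/- Let c > 0, ξ₀ ∈ ℝ, and let x(t) = x₀ ± √c·(ξ₀/|ξ₀|)·t with ξ₀ ≠ 0, M₀ ∈ ℂ, φ(x,t) = ξ₀(x - x(t)) + (1/2)M₀(x - x(t))². Then the spatial derivative of the eikonal expression R(x,t) = c(∂_x φ)² - (∂_t φ)² also vanishes on the ray: ∂_x R(x(t), t) = 0 for all t. -/

import Mathlib

theorem eikonal_deriv_vanishes_on_ray (c ξ₀ x₀ : ℝ) (hc : 0 < c) (hξ : ξ₀ ≠ 0)
    (M₀ : ℂ) (ε : ℝ) (hε : ε = 1 ∨ ε = -1)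
    (xr : ℝ → ℝ) (hxr : ∀ t, xr t = x₀ + ε * Real.sqrt c * (ξ₀ / |ξ₀|) * t)
    (φ : ℝ → ℝ → ℂ)
    (hφ : ∀ x t, φ x t = (ξ₀ : ℂ) * ((x : ℂ) - (xr t : ℂ)) +
        M₀ / 2 * ((x : ℂ) - (xr t : ℂ)) ^ 2) :
    ∀ t, deriv (fun y : ℝ =>
        (c : ℂ) * (deriv (fun z : ℝ => φ z t) y) ^ 2 -
          (deriv (fun s : ℝ => φ y s) t) ^ 2) (xr t) = 0 := by
  intro t
  set v : ℝ := ε * Real.sqrt c * (ξ₀ / |ξ₀|) with hv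
  have hv2 : v ^ 2 = c := by
    have hε2 : ε ^ 2 = 1 := by rcases hε with h | h <;> simp [h]
    have hq : (ξ₀ / |ξ₀|) ^ 2 = 1 := by
      rw [div_pow, sq_abs, div_self (pow_ne_zero 2 hξ)]
    rw [hv, mul_pow, mul_pow, hε2, Real.sq_sqrt hc.le, hq, one_mul, mul_one]
  -- derivative in x
  have hdx : ∀ y : ℝ, deriv (fun z : ℝ => φ z t) y
      = (ξ₀ : ℂ) + M₀ * ((y : ℂ) - (xr t : ℂ)) := by
    intro y
    have hf : HasDerivAt (fun z : ℝ => ((z : ℂ) - (xr t : ℂ))) 1 y := by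
      simpa using (Complex.ofRealCLM.hasDerivAt (x := y)).sub_const (xr t : ℂ)
    have h : HasDerivAt (fun z : ℝ => φ z t)
        ((ξ₀ : ℂ) * 1 + M₀ / 2 * (1 * ((y : ℂ) - (xr t : ℂ)) +
          ((y : ℂ) - (xr t : ℂ)) * 1)) y := by
      have h1 := hf.const_mul (ξ₀ : ℂ)
      have h2 := (hf.mul hf).const_mul (M₀ / 2)
      refine (h1.add h2).congr_of_eventuallyEq ?_
      filter_upwards with z; rw [hφ]; simp only [Pi.add_apply, Pi.mul_apply]; ring
    rw [h.deriv]; ring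
  -- derivative in t
  have hdt : ∀ y : ℝ, deriv (fun s : ℝ => φ y s) t
      = -(v : ℂ) * ((ξ₀ : ℂ) + M₀ * ((y : ℂ) - (xr t : ℂ))) := by
    intro y
    have hg : HasDerivAt (fun s : ℝ => ((y : ℂ) - (xr s : ℂ))) (-(v : ℂ)) t := by
      have hx : HasDerivAt (fun s : ℝ => ((xr s : ℝ) : ℂ)) (v : ℂ) t := by
        have hs : HasDerivAt (fun s : ℝ => ((s : ℝ) : ℂ)) 1 t := by
          have := Complex.ofRealCLM.hasDerivAt (x := t); simp at this; exact this
        have hr : HasDerivAt (fun s : ℝ => ((x₀ : ℂ) + (v : ℂ) * (s : ℂ)))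
            ((v : ℂ) * 1) t := (hs.const_mul (v : ℂ)).const_add (x₀ : ℂ)
        refine (hr.congr_of_eventuallyEq ?_).congr_deriv ?_
        · filter_upwards with s
          rw [hxr s]; push_cast; ring
        · ring
      have := (hasDerivAt_const t ((y : ℝ) : ℂ)).sub hx; simp at this; exact this
    have h : HasDerivAt (fun s : ℝ => φ y s)
        ((ξ₀ : ℂ) * (-(v : ℂ)) + M₀ / 2 * ((-(v : ℂ)) * ((y : ℂ) - (xr t : ℂ)) +
          ((y : ℂ) - (xr t : ℂ)) * (-(v : ℂ)))) t := by
      have h1 := hg.const_mul (ξ₀ : ℂ)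
      have h2 := (hg.mul hg).const_mul (M₀ / 2)
      refine (h1.add h2).congr_of_eventuallyEq ?_
      filter_upwards with s; rw [hφ]; simp only [Pi.add_apply, Pi.mul_apply]; ring
    rw [h.deriv]; ring
  have hfun : (fun y : ℝ =>
      (c : ℂ) * (deriv (fun z : ℝ => φ z t) y) ^ 2 -
        (deriv (fun s : ℝ => φ y s) t) ^ 2) = fun _ : ℝ => (0 : ℂ) := by
    funext y
    rw [hdx y, hdt y]
    have hcv : ((v : ℂ)) ^ 2 = (c : ℂ) := by
      rw [← Complex.ofReal_pow, hv2]
    have key : ∀ A : ℂ, (c : ℂ) * A ^ 2 - (-(v : ℂ) * A) ^ 2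
        = ((c : ℂ) - (v : ℂ) ^ 2) * A ^ 2 := fun A => by ring
    rw [key, hcv, sub_self, zero_mul]
  rw [hfun]
  simp
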